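/- Define polynomials P_n(x) by P_0(x) = P_1(x) = 1 and P_{n+1}(x) = P_n(x) - x P_{n-1}(x) for n ≥ 1, and define a_n(x) by a_0(x) = a_1(x) = 1, a_n(x) = a_{n-1}(x) - x a_{n-2}(x) for odd n ≥ 3, and a_n(x) = (1+x) a_{n-1}(x) - x a_{n-2}(x) for even n ≥ 2. Then for all n ≥ 0, a_n(x) * (1+x)^{n - ⌊n/2⌋} equals the polynomial obtained from (1+x)^n * P_n(x/(1+x)); equivalently, as rational functions, a_n(x) = (1+x)^{⌊n/2⌋} P_n(x/(1+x)). -/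

import Mathlib

open Polynomial

/-- The polynomials `a_n(x)`: `a₀ = a₁ = 1`, and for `n ≥ 2`,
`a_n = a_{n-1} - x a_{n-2}` if `n` is odd, `a_n = (1+x) a_{n-1} - x a_{n-2}` if `n` is even. -/
noncomputable def aPoly : ℕ → Polynomial ℚ
  | 0 => 1
  | 1 => 1
  | (n + 2) =>
    if (n + 2) % 2 = 1 then aPoly (n + 1) - Polynomial.X * aPoly n
    else (1 + Polynomial.X) * aPoly (n + 1) - Polynomial.X * aPoly n

/-- The polynomials `P_n(x)`: `P₀ = P₁ = 1` and `P_{n+1} = P_n - x P_{n-1}`. -/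
noncomputable def PPoly : ℕ → Polynomial ℚ
  | 0 => 1
  | 1 => 1
  | (n + 2) => PPoly (n + 1) - Polynomial.X * PPoly n

lemma one_add_X_ne_zero : (1 + RatFunc.X : RatFunc ℚ) ≠ 0 := by
  have : (1 + RatFunc.X : RatFunc ℚ) =
      algebraMap (Polynomial ℚ) (RatFunc ℚ) (1 + Polynomial.X) := by
    rw [map_add, map_one, RatFunc.algebraMap_X]
  rw [this]
  simp only [ne_eq, FaithfulSMul.algebraMap_eq_zero_iff]
  intro h
  have := congrArg (Polynomial.eval 0) h
  simp at this

/-- As rational functions, `a_n(x) = (1+x)^{⌊n/2⌋} P_n(x/(1+x))`. -/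
theorem aPoly_eq_PPoly_substitution (n : ℕ) :
    Polynomial.aeval (RatFunc.X : RatFunc ℚ) (aPoly n) =
      (1 + RatFunc.X) ^ (n / 2) *
        Polynomial.aeval ((RatFunc.X : RatFunc ℚ) / (1 + RatFunc.X)) (PPoly n) := by
  have h0 := one_add_X_ne_zero
  induction n using Nat.twoStepInduction with
  | zero => simp [aPoly, PPoly]
  | one => simp [aPoly, PPoly]
  | more n ih1 ih2 =>
    rcases Nat.even_or_odd n with he | ho
    · have hpar : n % 2 = 0 := Nat.even_iff.mp he
      have hm : (n + 2) % 2 = 0 := by omega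
      have hd1 : (n + 1) / 2 = n / 2 := by omega
      have hd2 : (n + 2) / 2 = n / 2 + 1 := by omega
      rw [show aPoly (n + 2) = (1 + Polynomial.X) * aPoly (n + 1) - Polynomial.X * aPoly n by
        rw [aPoly]; simp [hm]]
      rw [show PPoly (n + 2) = PPoly (n + 1) - Polynomial.X * PPoly n from rfl]
      simp only [map_sub, map_mul, map_add, map_one, aeval_X, ih1, ih2, hd1, hd2]
      field_simp
      ring
    · have hpar : n % 2 = 1 := Nat.odd_iff.mp ho
      have hm : (n + 2) % 2 = 1 := by omega
      have hd1 : (n + 1) / 2 = n / 2 + 1 := by omega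
      have hd2 : (n + 2) / 2 = n / 2 + 1 := by omega
      rw [show aPoly (n + 2) = aPoly (n + 1) - Polynomial.X * aPoly n by
        rw [aPoly]; simp [hm]]
      rw [show PPoly (n + 2) = PPoly (n + 1) - Polynomial.X * PPoly n from rfl]
      simp only [map_sub, map_mul, aeval_X, ih1, ih2, hd1, hd2]
      field_simp
      ring
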